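/- If 0 < β < α < 1, then no Vitali set is (α,β)-winning: Alice has no winning strategy in Schmidt's (α,β)-game whose target is a Vitali set. -/

import Mathlib

namespace Schmidt

/-- A closed interval, given by its two endpoints. -/
abbrev Ivl := ℝ × ℝ

/-- The diameter (length) of an interval. -/
def diam (I : Ivl) : ℝ := I.2 - I.1

/-- The set of points of an interval. -/
def toSet (I : Ivl) : Set ℝ := Set.Icc I.1 I.2

/-- `Sub I J` means the interval `I` is contained in the interval `J`. -/
def Sub (I J : Ivl) : Prop := toSet I ⊆ toSet J

/-- A strategy: a function producing a move from the finite sequence of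
the opponent's moves so far. -/
abbrev Strategy := List Ivl → Ivl

/-- The list of Bob's moves `B 0, …, B n`. -/
def hist (B : ℕ → Ivl) (n : ℕ) : List Ivl := List.ofFn (fun i : Fin (n + 1) => B i)

/-- Bob's sequence of moves `B` is a legal play against Alice's strategy `σ`
in the `(α,β)`-game: `B 0` has positive diameter and each `B (n+1)` is a
subinterval of Alice's previous move `σ (hist B n)` of `β` times its diameter. -/
def BobPlays (β : ℝ) (σ : Strategy) (B : ℕ → Ivl) : Prop :=
  0 < diam (B 0) ∧
  ∀ n, Sub (B (n + 1)) (σ (hist B n)) ∧ diam (B (n + 1)) = β * diam (σ (hist B n))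

/-- `σ` is a legal strategy for Alice in the `(α,β)`-game: whenever Bob's
moves so far are legal, Alice's response is a subinterval of Bob's last move
of `α` times its diameter. -/
def AliceLegal (α β : ℝ) (σ : Strategy) : Prop :=
  ∀ B : ℕ → Ivl, ∀ n : ℕ, 0 < diam (B 0) →
    (∀ m, m < n → Sub (B (m + 1)) (σ (hist B m)) ∧
      diam (B (m + 1)) = β * diam (σ (hist B m))) →
    Sub (σ (hist B n)) (B n) ∧ diam (σ (hist B n)) = α * diam (B n)

/-- `σ` is a winning strategy for Alice in Schmidt's `(α,β)`-game with target `T`: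
it is legal, and in every run against it every point of the intersection of
Alice's moves lies in `T`. -/
def AliceWinsWith (α β : ℝ) (T : Set ℝ) (σ : Strategy) : Prop :=
  AliceLegal α β σ ∧
  ∀ B : ℕ → Ivl, BobPlays β σ B →
    ∀ x : ℝ, (∀ n, x ∈ toSet (σ (hist B n))) → x ∈ T

/-- `T` is `(α,β)`-winning: Alice has a winning strategy. -/
def Winning (α β : ℝ) (T : Set ℝ) : Prop := ∃ σ, AliceWinsWith α β T σ

/-- The list of Alice's moves `A 0, …, A (n-1)`. -/
def histA (A : ℕ → Ivl) (n : ℕ) : List Ivl := List.ofFn (fun i : Fin n => A i)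

/-- Alice's sequence of moves `A` is a legal play against Bob's strategy `τ`. -/
def AlicePlays (α : ℝ) (τ : Strategy) (A : ℕ → Ivl) : Prop :=
  ∀ n, Sub (A n) (τ (histA A n)) ∧ diam (A n) = α * diam (τ (histA A n))

/-- `τ` is a legal strategy for Bob in the `(α,β)`-game. -/
def BobLegal (α β : ℝ) (τ : Strategy) : Prop :=
  0 < diam (τ []) ∧
  ∀ A : ℕ → Ivl, ∀ n : ℕ,
    (∀ m, m ≤ n → Sub (A m) (τ (histA A m)) ∧
      diam (A m) = α * diam (τ (histA A m))) →
    Sub (τ (histA A (n + 1))) (A n) ∧ diam (τ (histA A (n + 1))) = β * diam (A n)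

/-- `τ` is a winning strategy for Bob in Schmidt's `(α,β)`-game with target `T`. -/
def BobWinsWith (α β : ℝ) (T : Set ℝ) (τ : Strategy) : Prop :=
  BobLegal α β τ ∧
  ∀ A : ℕ → Ivl, AlicePlays α τ A →
    ∀ x : ℝ, (∀ n, x ∈ toSet (A n)) → x ∉ T

/-- Bob has a winning strategy in the `(α,β)`-game with target `T`. -/
def BobWinning (α β : ℝ) (T : Set ℝ) : Prop := ∃ τ, BobWinsWith α β T τ

/-- `V` is a Vitali set: it contains exactly one representative of each
coset of `ℚ` in `ℝ`. -/
def IsVitali (V : Set ℝ) : Prop :=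
  ∀ x : ℝ, ∃! v : ℝ, v ∈ V ∧ ∃ q : ℚ, x - v = (q : ℝ)

/-- `P` is a partial Vitali set: it contains at most one representative of
each coset of `ℚ` in `ℝ`. -/
def IsPartialVitali (P : Set ℝ) : Prop :=
  ∀ x ∈ P, ∀ y ∈ P, (∃ q : ℚ, x - y = (q : ℝ)) → x = y

/-- `T` is `(α,β,I)`-winning: Alice has a winning strategy in Schmidt's
`(α,β)`-game with target `T` when Bob's first move is required to be `I`. -/
def WinningFrom (α β : ℝ) (T : Set ℝ) (I : Ivl) : Prop :=
  ∃ σ : Strategy,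
    (∀ B : ℕ → Ivl, B 0 = I → ∀ n : ℕ,
      (∀ m, m < n → Sub (B (m + 1)) (σ (hist B m)) ∧
        diam (B (m + 1)) = β * diam (σ (hist B m))) →
      Sub (σ (hist B n)) (B n) ∧ diam (σ (hist B n)) = α * diam (B n)) ∧
    (∀ B : ℕ → Ivl, B 0 = I → BobPlays β σ B →
      ∀ x : ℝ, (∀ n, x ∈ toSet (σ (hist B n))) → x ∈ T)


section Aux

/-- Shift an interval by `q`. -/
def shiftI (q : ℝ) (I : Ivl) : Ivl := (I.1 + q, I.2 + q)

lemma diam_shiftI (q : ℝ) (I : Ivl) : diam (shiftI q I) = diam I := by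
  simp [shiftI, diam]

variable (σ : Strategy) (β q : ℝ)

/-- The history of Bob's special play against Alice's strategy `σ`. -/
def Sseq : ℕ → List Ivl
  | 0 => [((0:ℝ), (1:ℝ))]
  | n+1 =>
    Sseq n ++
      [((σ (List.ofFn (fun k : Fin (n+1) =>
          shiftI q (σ ((Sseq n).take (k.1+1)))))).1 - q,
        (σ (List.ofFn (fun k : Fin (n+1) =>
          shiftI q (σ ((Sseq n).take (k.1+1)))))).1 - q + β * diam (σ (Sseq n)))]

/-- Bob's special play against Alice's strategy `σ`. -/
def Bseq : ℕ → Ivl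
  | 0 => ((0:ℝ), (1:ℝ))
  | n+1 =>
    ((σ (List.ofFn (fun k : Fin (n+1) =>
        shiftI q (σ ((Sseq σ β q n).take (k.1+1)))))).1 - q,
     (σ (List.ofFn (fun k : Fin (n+1) =>
        shiftI q (σ ((Sseq σ β q n).take (k.1+1)))))).1 - q
       + β * diam (σ (Sseq σ β q n)))

lemma Sseq_succ (n : ℕ) :
    Sseq σ β q (n+1) = Sseq σ β q n ++ [Bseq σ β q (n+1)] := rfl

lemma Sseq_length (n : ℕ) : (Sseq σ β q n).length = n + 1 := by
  induction n with
  | zero => rfl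
  | succ n ih => rw [Sseq_succ]; simp [ih]

lemma hist_succ (B : ℕ → Ivl) (n : ℕ) :
    hist B (n+1) = hist B n ++ [B (n+1)] := by
  rw [hist, List.ofFn_succ']
  simp [hist, List.concat_eq_append]

lemma hist_Bseq (n : ℕ) : hist (Bseq σ β q) n = Sseq σ β q n := by
  induction n with
  | zero =>
    show List.ofFn (fun i : Fin 1 => Bseq σ β q i) = _
    simp [List.ofFn_succ]
    rfl
  | succ n ih => rw [hist_succ, ih, Sseq_succ]

lemma take_Sseq {k n : ℕ} (h : k ≤ n) :
    (Sseq σ β q n).take (k+1) = Sseq σ β q k := by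
  induction n with
  | zero =>
    have : k = 0 := Nat.le_zero.mp h
    subst this
    rfl
  | succ n ih =>
    rcases eq_or_lt_of_le h with h' | h'
    · subst h'
      have hl := Sseq_length σ β q (n+1)
      calc (Sseq σ β q (n+1)).take (n+1+1)
          = (Sseq σ β q (n+1)).take (Sseq σ β q (n+1)).length := by rw [hl]
        _ = Sseq σ β q (n+1) := List.take_length
    · have hk : k ≤ n := Nat.lt_succ_iff.mp h'
      rw [Sseq_succ,
        List.take_append_of_le_length (by rw [Sseq_length]; omega), ih hk]

lemma Bseq_succ_eq (n : ℕ) :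
    Bseq σ β q (n+1) =
      ((σ (hist (fun k => shiftI q (σ (hist (Bseq σ β q) k))) n)).1 - q,
       (σ (hist (fun k => shiftI q (σ (hist (Bseq σ β q) k))) n)).1 - q
         + β * diam (σ (hist (Bseq σ β q) n))) := by
  have hinner :
      List.ofFn (fun k : Fin (n+1) => shiftI q (σ ((Sseq σ β q n).take (k.1+1))))
        = hist (fun k => shiftI q (σ (hist (Bseq σ β q) k))) n := by
    unfold hist
    congr 1
    funext k
    rw [take_Sseq σ β q (Nat.lt_succ_iff.mp k.2), ← hist_Bseq σ β q k.1]
    rfl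
  show ((σ (List.ofFn (fun k : Fin (n+1) =>
        shiftI q (σ ((Sseq σ β q n).take (k.1+1)))))).1 - q,
     (σ (List.ofFn (fun k : Fin (n+1) =>
        shiftI q (σ ((Sseq σ β q n).take (k.1+1)))))).1 - q
       + β * diam (σ (Sseq σ β q n))) = _
  rw [hinner, hist_Bseq]

end Aux

/-- if `0 < β < α < 1` then no Vitali set is `(α,β)`-winning. -/
theorem stmt4 (α β : ℝ) (hβ0 : 0 < β) (hβα : β < α) (hα1 : α < 1)
    (V : Set ℝ) (hV : IsVitali V) :
    ¬ Winning α β V := by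
  rintro ⟨σ, hLegal, hWin⟩
  have hα0 : 0 < α := hβ0.trans hβα
  set B : ℕ → Ivl := Bseq σ β 1 with hBdef
  set B' : ℕ → Ivl := fun k => shiftI 1 (σ (hist B k)) with hB'def
  have hB0 : B 0 = ((0:ℝ), (1:ℝ)) := rfl
  have hB0pos : 0 < diam (B 0) := by norm_num [hB0, diam]
  -- Alice's response to the empty-prefix situation
  have alice0 : Sub (σ (hist B 0)) (B 0) ∧ diam (σ (hist B 0)) = α * diam (B 0) :=
    hLegal B 0 hB0pos (fun m hm => absurd hm (Nat.not_lt_zero m))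
  have hB'0pos : 0 < diam (B' 0) := by
    show 0 < diam (shiftI 1 (σ (hist B 0)))
    rw [diam_shiftI, alice0.2]
    have : diam (B 0) = 1 := by norm_num [hB0, diam]
    rw [this]; linarith
  -- The main simultaneous legality induction.
  have key : ∀ n : ℕ,
      (Sub (B (n+1)) (σ (hist B n)) ∧ diam (B (n+1)) = β * diam (σ (hist B n))) ∧
      (Sub (B' (n+1)) (σ (hist B' n)) ∧ diam (B' (n+1)) = β * diam (σ (hist B' n))) := by
    intro n
    induction n using Nat.strong_induction_on with
    | _ n IH =>
    have prefix1 : ∀ m, m < n → Sub (B (m+1)) (σ (hist B m)) ∧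
        diam (B (m+1)) = β * diam (σ (hist B m)) := fun m hm => (IH m hm).1
    have prefix2 : ∀ m, m < n → Sub (B' (m+1)) (σ (hist B' m)) ∧
        diam (B' (m+1)) = β * diam (σ (hist B' m)) := fun m hm => (IH m hm).2
    have aliceB : ∀ k, k ≤ n → Sub (σ (hist B k)) (B k) ∧
        diam (σ (hist B k)) = α * diam (B k) :=
      fun k hk => hLegal B k hB0pos (fun m hm => prefix1 m (lt_of_lt_of_le hm hk))
    have posB : ∀ k, k ≤ n → 0 < diam (B k) := by
      intro k hk
      induction k with
      | zero => exact hB0pos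
      | succ k ihk =>
        have hkn : k < n := Nat.lt_of_succ_le hk
        have hk' : k ≤ n := le_of_lt hkn
        rw [(prefix1 k hkn).2, (aliceB k hk').2]
        exact mul_pos hβ0 (mul_pos hα0 (ihk hk'))
    have posBn : 0 < diam (B n) := posB n le_rfl
    have aliceBn := aliceB n le_rfl
    have posAn : 0 < diam (σ (hist B n)) := by
      rw [aliceBn.2]; exact mul_pos hα0 posBn
    have aliceB'n : Sub (σ (hist B' n)) (B' n) ∧
        diam (σ (hist B' n)) = α * diam (B' n) :=
      hLegal B' n hB'0pos prefix2
    have diamB'n : diam (B' n) = diam (σ (hist B n)) := diam_shiftI _ _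
    have diamA'n : diam (σ (hist B' n)) = α * diam (σ (hist B n)) := by
      rw [aliceB'n.2, diamB'n]
    have posA'n : 0 < diam (σ (hist B' n)) := by
      rw [diamA'n]; exact mul_pos hα0 posAn
    set An := σ (hist B n) with hAn
    set A'n := σ (hist B' n) with hA'n
    have hA'ne : A'n.1 ≤ A'n.2 := by
      have := posA'n; unfold diam at this; linarith
    have hAne : An.1 ≤ An.2 := by
      have := posAn; unfold diam at this; linarith
    have hB'nset : toSet (B' n) = Set.Icc (An.1 + 1) (An.2 + 1) := rfl
    have hmem1 : A'n.1 ∈ toSet (B' n) :=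
      aliceB'n.1 (Set.mem_Icc.mpr ⟨le_refl _, hA'ne⟩)
    have hmem2 : A'n.2 ∈ toSet (B' n) :=
      aliceB'n.1 (Set.mem_Icc.mpr ⟨hA'ne, le_refl _⟩)
    rw [hB'nset, Set.mem_Icc] at hmem1 hmem2
    -- β * diam An ≤ diam A'n
    have hβα' : β * diam An ≤ A'n.2 - A'n.1 := by
      have h1 : β * diam An ≤ α * diam An :=
        mul_le_mul_of_nonneg_right (le_of_lt hβα) (le_of_lt posAn)
      have h2 : diam A'n = A'n.2 - A'n.1 := rfl
      rw [← h2]; rw [diamA'n]; exact h1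
    have hBs : B (n+1) = (A'n.1 - 1, A'n.1 - 1 + β * diam An) := by
      rw [hBdef, Bseq_succ_eq]
    have H1 : Sub (B (n+1)) An ∧ diam (B (n+1)) = β * diam An := by
      constructor
      · rw [hBs]
        show Set.Icc (A'n.1 - 1) (A'n.1 - 1 + β * diam An) ⊆ Set.Icc An.1 An.2
        apply Set.Icc_subset_Icc
        · linarith [hmem1.1]
        · linarith [hmem2.2]
      · rw [hBs]; show (A'n.1 - 1 + β * diam An) - (A'n.1 - 1) = β * diam An; ring
    have prefix1' : ∀ m, m < n + 1 → Sub (B (m+1)) (σ (hist B m)) ∧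
        diam (B (m+1)) = β * diam (σ (hist B m)) := by
      intro m hm
      rcases Nat.lt_succ_iff_lt_or_eq.mp hm with h | h
      · exact prefix1 m h
      · subst h; exact H1
    have aliceBn1 : Sub (σ (hist B (n+1))) (B (n+1)) ∧
        diam (σ (hist B (n+1))) = α * diam (B (n+1)) :=
      hLegal B (n+1) hB0pos prefix1'
    set An1 := σ (hist B (n+1)) with hAn1
    have posAn1 : 0 < diam An1 := by
      rw [aliceBn1.2, H1.2]
      exact mul_pos hα0 (mul_pos hβ0 posAn)
    have hAn1ne : An1.1 ≤ An1.2 := by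
      have := posAn1; unfold diam at this; linarith
    have hsubBn1 : toSet An1 ⊆ Set.Icc (A'n.1 - 1) (A'n.1 - 1 + β * diam An) := by
      have h := aliceBn1.1
      rw [hBs] at h
      exact h
    have hm1 : A'n.1 - 1 ≤ An1.1 ∧ An1.1 ≤ A'n.1 - 1 + β * diam An :=
      Set.mem_Icc.mp (hsubBn1 (Set.mem_Icc.mpr ⟨le_refl _, hAn1ne⟩))
    have hm2 : A'n.1 - 1 ≤ An1.2 ∧ An1.2 ≤ A'n.1 - 1 + β * diam An :=
      Set.mem_Icc.mp (hsubBn1 (Set.mem_Icc.mpr ⟨hAn1ne, le_refl _⟩))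
    have hB'succ : B' (n+1) = shiftI 1 An1 := rfl
    have H2 : Sub (B' (n+1)) A'n ∧ diam (B' (n+1)) = β * diam A'n := by
      constructor
      · rw [hB'succ]
        show Set.Icc (An1.1 + 1) (An1.2 + 1) ⊆ Set.Icc A'n.1 A'n.2
        apply Set.Icc_subset_Icc
        · linarith [hm1.1]
        · linarith [hm2.2]
      · rw [hB'succ, diam_shiftI, aliceBn1.2, H1.2, diamA'n]
        ring
    exact ⟨H1, H2⟩
  -- Both plays are legal.
  have hBplays : BobPlays β σ B := ⟨hB0pos, fun n => (key n).1⟩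
  have hB'plays : BobPlays β σ B' := ⟨hB'0pos, fun n => (key n).2⟩
  have aliceB : ∀ n, Sub (σ (hist B n)) (B n) ∧
      diam (σ (hist B n)) = α * diam (B n) :=
    fun n => hLegal B n hB0pos (fun m _ => (key m).1)
  have aliceB' : ∀ n, Sub (σ (hist B' n)) (B' n) ∧
      diam (σ (hist B' n)) = α * diam (B' n) :=
    fun n => hLegal B' n hB'0pos (fun m _ => (key m).2)
  have posB : ∀ n, 0 < diam (B n) := by
    intro n
    induction n with
    | zero => exact hB0pos
    | succ n ih =>
      rw [(key n).1.2, (aliceB n).2]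
      exact mul_pos hβ0 (mul_pos (hβ0.trans hβα) ih)
  have posA' : ∀ n, 0 < diam (σ (hist B' n)) := by
    intro n
    rw [(aliceB' n).2]
    have : diam (B' n) = diam (σ (hist B n)) := diam_shiftI _ _
    rw [this, (aliceB n).2]
    exact mul_pos hα0 (mul_pos hα0 (posB n))
  -- the nested sequence of Alice's answers in the shifted game
  set l : ℕ → ℝ := fun n => (σ (hist B' n)).1 with hl
  set r : ℕ → ℝ := fun n => (σ (hist B' n)).2 with hr
  have hlr : ∀ n, l n ≤ r n := by
    intro n
    have := posA' n; unfold diam at this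
    show (σ (hist B' n)).1 ≤ (σ (hist B' n)).2
    linarith
  have nest : ∀ n, toSet (σ (hist B' (n+1))) ⊆ toSet (σ (hist B' n)) :=
    fun n => Set.Subset.trans (aliceB' (n+1)).1 (key n).2.1
  have hmono : ∀ n, l n ≤ l (n+1) ∧ r (n+1) ≤ r n := by
    intro n
    have h1 := nest n (Set.mem_Icc.mpr ⟨le_refl _, hlr (n+1)⟩)
    have h2 := nest n (Set.mem_Icc.mpr ⟨hlr (n+1), le_refl _⟩)
    rw [toSet, Set.mem_Icc] at h1 h2
    exact ⟨h1.1, h2.2⟩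
  have hlmono : Monotone l := monotone_nat_of_le_succ (fun n => (hmono n).1)
  have hrmono : Antitone r := antitone_nat_of_succ_le (fun n => (hmono n).2)
  have cross : ∀ m n, l m ≤ r n := by
    intro m n
    rcases le_total m n with h | h
    · exact le_trans (hlmono h) (hlr n)
    · exact le_trans (hlr m) (hrmono h)
  have hbdd : BddAbove (Set.range l) := by
    refine ⟨r 0, ?_⟩
    rintro x ⟨m, rfl⟩
    exact cross m 0
  set x' : ℝ := sSup (Set.range l) with hx'def
  have hx'mem : ∀ n, x' ∈ toSet (σ (hist B' n)) := by
    intro n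
    constructor
    · exact le_csSup hbdd ⟨n, rfl⟩
    · refine csSup_le ⟨l 0, ⟨0, rfl⟩⟩ ?_
      rintro x ⟨m, rfl⟩
      exact cross m n
  have hx'V : x' ∈ V := hWin B' hB'plays x' hx'mem
  have hxmem : ∀ n, (x' - 1) ∈ toSet (σ (hist B n)) := by
    intro n
    have h := (aliceB' n).1 (hx'mem n)
    have : toSet (B' n) = Set.Icc ((σ (hist B n)).1 + 1) ((σ (hist B n)).2 + 1) := rfl
    rw [this, Set.mem_Icc] at h
    exact Set.mem_Icc.mpr ⟨by linarith [h.1], by linarith [h.2]⟩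
  have hxV : (x' - 1) ∈ V := hWin B hBplays (x' - 1) hxmem
  obtain ⟨v, _, huniq⟩ := hV x'
  have e1 : x' = v := huniq x' ⟨hx'V, 0, by norm_num⟩
  have e2 : x' - 1 = v := huniq (x' - 1) ⟨hxV, 1, by push_cast; ring⟩
  have : x' = x' - 1 := e1.trans e2.symm
  linarith

end Schmidt
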